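/- Let q be a prime power, n = 4k, δ ∈ F_{q^n}, and g(x) = Σ_{i=1}^k x^{q^{2(i−1)} + q^{2(i−1)+2k}}. Then for any nonzero a ∈ F_q, the polynomial f(x) = g(x^q − x + δ) + a·x permutes F_{q^n} if and only if Tr(δ) ≠ a. -/

import Mathlib

open Finset Polynomial

lemma aux_sum_even_odd {M : Type} [AddCommMonoid M] (m : ℕ) (f : ℕ → M) :
    ∑ i ∈ range (2*m), f i = ∑ i ∈ range m, f (2*i) + ∑ i ∈ range m, f (2*i+1) := by
  induction m with
  | zero => simp
  | succ m ih =>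
    rw [show 2*(m+1) = (2*m)+1+1 by ring, Finset.sum_range_succ, Finset.sum_range_succ,
      Finset.sum_range_succ (fun i => f (2*i)), Finset.sum_range_succ (fun i => f (2*i+1)), ih]
    abel

lemma aux_sum_shift {M : Type} [AddCommGroup M] (m : ℕ) (f : ℕ → M) (h : f m = f 0) :
    ∑ i ∈ range m, f (i+1) = ∑ i ∈ range m, f i := by
  have h1 := Finset.sum_range_succ f m
  have h2 := Finset.sum_range_succ' f m
  rw [h1, h] at h2
  exact (add_right_cancel h2.symm)

lemma aux_card_roots {F : Type} [Field F] [Fintype F] (P : F[X]) (hP : P ≠ 0) :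
    ({x : F | P.eval x = 0}).ncard ≤ P.natDegree := by
  classical
  have hsub : (Finset.univ.filter (fun x : F => P.eval x = 0)) ⊆ P.roots.toFinset := by
    intro x hx
    simp only [Finset.mem_filter] at hx
    simp [Polynomial.mem_roots, hP, Polynomial.IsRoot.def, hx.2]
  have h1 : {x : F | P.eval x = 0} = ↑(Finset.univ.filter (fun x : F => P.eval x = 0)) := by
    ext x; simp
  rw [h1, Set.ncard_coe_finset]
  calc (Finset.univ.filter (fun x : F => P.eval x = 0)).card ≤ P.roots.toFinset.card :=
        Finset.card_le_card hsub
    _ ≤ Multiset.card P.roots := Multiset.toFinset_card_le _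
    _ ≤ P.natDegree := Polynomial.card_roots' P

lemma aux_card_mul {F : Type} [AddCommGroup F] [Fintype F] (θ : F →+ F) :
    Nat.card F = Nat.card θ.range * Nat.card θ.ker := by
  rw [AddSubgroup.card_eq_card_quotient_mul_card_addSubgroup θ.ker]
  congr 1
  exact Nat.card_congr (QuotientAddGroup.quotientKerEquivRange θ).toEquiv

lemma aux_range_eq {F : Type} [AddCommGroup F] [Fintype F] (θ : F →+ F) (B : Set F)
    (hsub : (θ.range : Set F) ⊆ B) (b kb : ℕ)
    (hB : B.ncard ≤ b) (hker : Nat.card θ.ker ≤ kb) (hcard : Nat.card F = b * kb) :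
    (θ.range : Set F) = B := by
  have hk0 : 0 < Nat.card θ.ker := Nat.card_pos
  have hr0 : 0 < Nat.card θ.range := Nat.card_pos
  have h1 := aux_card_mul θ
  have hrange : b ≤ Nat.card θ.range := by
    by_contra h
    push_neg at h
    have : Nat.card θ.range * Nat.card θ.ker < b * kb :=
      Nat.mul_lt_mul_of_lt_of_le h hker (by omega)
    omega
  have h2 : (θ.range : Set F).ncard = Nat.card θ.range := (Nat.card_coe_set_eq _).symm
  exact Set.eq_of_subset_of_ncard_le hsub (by omega) (Set.toFinite B)

set_option maxHeartbeats 2000000 in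
theorem stmt_13 (p e : ℕ) [Fact p.Prime] (he : 0 < e) (q : ℕ) (hq : q = p ^ e)
    (F : Type) [Field F] [Fintype F] (k : ℕ) (hk : 0 < k) (n : ℕ) (hn : n = 4 * k)
    (hF : Fintype.card F = q ^ n)
    (δ : F)
    (g : F → F) (hg : ∀ x, g x = ∑ i ∈ Finset.range k, x ^ (q ^ (2 * i) + q ^ (2 * i + 2 * k)))
    (Tr : F → F) (hTr : ∀ x, Tr x = ∑ i ∈ Finset.range n, x ^ q ^ i)
    (a : F) (haq : a ^ q = a) (ha : a ≠ 0) :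
    Function.Bijective (fun x : F => g (x ^ q - x + δ) + a * x) ↔ Tr δ ≠ a := by
  classical
  have hp : p.Prime := Fact.out
  have hq2 : 2 ≤ q := by
    subst hq
    calc 2 ≤ p := hp.two_le
    _ ≤ p ^ e := Nat.le_self_pow (by omega) p
  have hn4 : 4 ≤ n := by omega
  -- characteristic
  haveI hcharP : CharP F p := by
    obtain ⟨r, hr⟩ := CharP.exists F
    haveI := hr
    have hrp : r.Prime := CharP.char_is_prime F r
    obtain ⟨m, _, hcard⟩ := FiniteField.card F r
    have hdvd : r ∣ q ^ n := by
      rw [← hF, hcard]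
      exact dvd_pow_self r (by exact_mod_cast m.2.ne')
    have : r ∣ p := by
      rw [hq] at hdvd
      rw [← pow_mul] at hdvd
      exact hrp.dvd_of_dvd_pow hdvd
    have hrpe : r = p := ((Nat.prime_dvd_prime_iff_eq hrp hp).mp this)
    rwa [hrpe] at hr
  haveI : ExpChar F p := ExpChar.prime hp
  -- Frobenius
  set φ : F →+* F := iterateFrobenius F p e with hφdef
  have hφ : ∀ x : F, φ x = x ^ q := by
    intro x; rw [hφdef, iterateFrobenius_def, hq]
  -- exponent arithmetic
  have hpp : ∀ (x : F) (i j : ℕ), (x ^ q ^ i) ^ q ^ j = x ^ q ^ (i+j) := by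
    intro x i j; rw [← pow_mul, ← pow_add]
  have hqn : ∀ x : F, x ^ q ^ n = x := by
    intro x; rw [← hF]; exact FiniteField.pow_card x
  have hφpow : ∀ (m : ℕ) (x : F), φ (x ^ q ^ m) = x ^ q ^ (m+1) := by
    intro m x
    rw [hφ, ← pow_mul, ← pow_succ]
  have hφ2 : ∀ x : F, φ (φ x) = x ^ q ^ 2 := by
    intro x
    rw [hφ x, show x ^ q = x ^ q ^ 1 by rw [pow_one], hφpow]
  -- the S map
  set S : F → F := fun x => ∑ i ∈ range (2*k), x ^ q ^ (2*i) with hSdef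
  have hSadd : ∀ x y : F, S (x + y) = S x + S y := by
    intro x y
    rw [hSdef]
    simp only
    rw [← Finset.sum_add_distrib]
    refine Finset.sum_congr rfl fun i _ => ?_
    rw [hq, ← pow_mul]
    exact add_pow_char_pow x y (p := p) (n := e*(2*i))
  have hSsub : ∀ x y : F, S (x - y) = S x - S y := by
    intro x y
    rw [hSdef]
    simp only
    rw [← Finset.sum_sub_distrib]
    refine Finset.sum_congr rfl fun i _ => ?_
    rw [hq, ← pow_mul]
    exact sub_pow_char_pow x y (e*(2*i))
  have hSφ : ∀ x : F, S (φ x) = φ (S x) := by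
    intro x
    rw [hSdef]
    simp only
    rw [map_sum]
    refine Finset.sum_congr rfl fun i _ => ?_
    rw [hφ x, show x ^ q = x ^ q ^ 1 by rw [pow_one], hpp, hφpow, Nat.add_comm 1 (2*i)]
  have hSfix : ∀ x : F, φ (φ (S x)) = S x := by
    intro x
    rw [hSdef]
    simp only
    rw [map_sum, map_sum]
    have : ∀ i ∈ range (2*k), φ (φ (x ^ q ^ (2*i))) = x ^ q ^ (2*(i+1)) := by
      intro i _
      rw [hφpow, hφpow, show 2*i+1+1 = 2*(i+1) from by omega]
    rw [Finset.sum_congr rfl this]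
    exact aux_sum_shift (2*k) (fun i => x ^ q ^ (2*i)) (by
      show x ^ q ^ (2*(2*k)) = x ^ q ^ (2*0)
      rw [show 2*(2*k) = n by omega, hqn]
      norm_num)
  -- g in product form
  have hg' : ∀ z : F, g z = ∑ i ∈ range k, z ^ q ^ (2*i) * z ^ q ^ (2*i+2*k) := by
    intro z
    rw [hg]
    exact Finset.sum_congr rfl fun i _ => pow_add z _ _
  have hgfix : ∀ z : F, φ (φ (g z)) = g z := by
    intro z
    rw [hg', map_sum, map_sum]
    have h1 : ∀ i ∈ range k, φ (φ (z ^ q ^ (2*i) * z ^ q ^ (2*i+2*k)))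
        = z ^ q ^ (2*(i+1)) * z ^ q ^ (2*(i+1)+2*k) := by
      intro i _
      rw [map_mul, map_mul, hφpow, hφpow, hφpow, hφpow,
        show 2*i+1+1 = 2*(i+1) from by omega, show 2*i+2*k+1+1 = 2*(i+1)+2*k from by omega]
    rw [Finset.sum_congr rfl h1]
    exact aux_sum_shift k (fun i => z ^ q ^ (2*i) * z ^ q ^ (2*i+2*k)) (by
      show z ^ q ^ (2*k) * z ^ q ^ (2*k+2*k) = z ^ q ^ (2*0) * z ^ q ^ (2*0+2*k)
      rw [show 2*k+2*k = n from by omega, hqn, show 2*0 = 0 from rfl, pow_zero, pow_one,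
        show 0+2*k = 2*k from by omega]
      ring)
  have hfix2pow : ∀ d : F, φ (φ d) = d → ∀ i : ℕ, d ^ q ^ (2*i) = d := by
    intro d hd i
    induction i with
    | zero => simp
    | succ i ih =>
      calc d ^ q ^ (2*(i+1)) = (d ^ q ^ (2*i)) ^ q ^ 2 := by
            rw [hpp, show 2*i+2 = 2*(i+1) from by omega]
        _ = d ^ q ^ 2 := by rw [ih]
        _ = φ (φ d) := (hφ2 d).symm
        _ = d := hd
  have hgexp : ∀ v d : F, φ (φ d) = d → g (v + d) = g v + d * S v + (k:F) * d^2 := by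
    intro v d hd
    have hdi := hfix2pow d hd
    have hadd : ∀ (m : ℕ) (x y : F), (x + y) ^ q ^ m = x ^ q ^ m + y ^ q ^ m := by
      intro m x y
      rw [hq, ← pow_mul]
      exact add_pow_char_pow x y (p := p) (n := e*m)
    rw [hg' (v+d), hg' v]
    have h1 : ∀ i ∈ range k, (v+d) ^ q ^ (2*i) * (v+d) ^ q ^ (2*i+2*k)
        = v ^ q ^ (2*i) * v ^ q ^ (2*i+2*k) + d * (v ^ q ^ (2*i) + v ^ q ^ (2*i+2*k)) + d^2 := by
      intro i _
      have hd' : d ^ q ^ (2*i+2*k) = d := by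
        rw [show 2*i+2*k = 2*(i+k) from by omega]
        exact hdi (i+k)
      rw [hadd, hadd, hdi i, hd']
      ring
    rw [Finset.sum_congr rfl h1, Finset.sum_add_distrib, Finset.sum_add_distrib,
      ← Finset.mul_sum, Finset.sum_const, card_range, nsmul_eq_mul]
    have h2 : ∑ i ∈ range k, (v ^ q ^ (2*i) + v ^ q ^ (2*i+2*k)) = S v := by
      rw [Finset.sum_add_distrib, hSdef]
      simp only
      rw [show (2:ℕ)*k = k + k from by omega, Finset.sum_range_add]
      congr 1
      exact Finset.sum_congr rfl fun i _ => by rw [show 2*(k+i) = 2*i+(k+k) from by omega]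
    rw [h2]
  have hTrS : ∀ x : F, Tr x = S x + φ (S x) := by
    intro x
    rw [hTr, hSdef]
    simp only
    rw [show n = 2*(2*k) from by omega, aux_sum_even_odd, map_sum]
    congr 1
    exact Finset.sum_congr rfl fun i _ => (hφpow (2*i) x).symm
  have hφa : φ a = a := by rw [hφ]; exact haq
  have hφnat : ∀ m : ℕ, φ (m : F) = m := fun m => map_natCast φ m
  have hinj : ∀ i j : ℕ, q ^ i = q ^ j → i = j := fun i j h => Nat.pow_right_injective hq2 h
  have hTrsub : ∀ x y : F, Tr (x - y) = Tr x - Tr y := by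
    intro x y
    rw [hTr, hTr, hTr, ← Finset.sum_sub_distrib]
    refine Finset.sum_congr rfl fun i _ => ?_
    rw [hq, ← pow_mul]
    exact sub_pow_char_pow x y (e*i)
  have hTrφ : ∀ x : F, Tr (φ x) = Tr x := by
    intro x
    rw [hTr, hTr]
    have h1 : ∀ i ∈ range n, (φ x) ^ q ^ i = x ^ q ^ (i+1) := by
      intro i _
      rw [hφ x, show x ^ q = x ^ q ^ 1 from by rw [pow_one], hpp, Nat.add_comm]
    rw [Finset.sum_congr rfl h1]
    exact aux_sum_shift n (fun i => x ^ q ^ i) (by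
      show x ^ q ^ n = x ^ q ^ 0
      rw [hqn, pow_zero, pow_one])
  constructor
  · intro hbij hTa
    set θ : F →+ F := AddMonoidHom.mk' (fun c => φ c - c)
      (by intro u v; rw [map_add]; ring) with hθdef
    set ψ : F →+ F := AddMonoidHom.mk' (fun y => φ (S y) - S y)
      (by intro u v; rw [hSadd, map_add]; ring) with hψdef
    set W : Set F := {w : F | φ w = -w} with hWdef
    set Z : Set F := {x : F | Tr x = 0} with hZdef
    -- card of W
    have hWcard : W.ncard ≤ q := by
      have h1 : W = {x : F | ((X:F[X])^q + X).eval x = 0} := by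
        ext w
        simp only [hWdef, Set.mem_setOf_eq, Polynomial.eval_add, Polynomial.eval_pow,
          Polynomial.eval_X]
        rw [hφ]
        constructor
        · intro h; rw [h]; ring
        · intro h; linear_combination h
      have h2 : ((X:F[X])^q + X) ≠ 0 := by
        intro h
        have h3 := congrArg (fun P : F[X] => Polynomial.coeff P q) h
        simp only [Polynomial.coeff_add, Polynomial.coeff_X_pow, if_pos rfl,
          Polynomial.coeff_X, Polynomial.coeff_zero] at h3
        rw [if_neg (by omega : ¬ (1 = q))] at h3
        simp at h3
      rw [h1]
      refine le_trans (aux_card_roots _ h2) ?_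
      refine le_trans (Polynomial.natDegree_add_le _ _) ?_
      simp only [Polynomial.natDegree_X_pow, Polynomial.natDegree_X]
      omega
    -- card of Z
    have hZcard : Z.ncard ≤ q^(n-1) := by
      set P : F[X] := ∑ i ∈ range n, (X:F[X])^(q^i) with hP
      have heval : ∀ x : F, P.eval x = Tr x := by
        intro x
        rw [hP, hTr, Polynomial.eval_finset_sum]
        exact Finset.sum_congr rfl fun i _ => by rw [Polynomial.eval_pow, Polynomial.eval_X]
      have h1 : Z = {x : F | P.eval x = 0} := by
        ext x; simp [hZdef, heval]
      have hPne : P ≠ 0 := by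
        intro h
        have h2 := congrArg (fun P : F[X] => Polynomial.coeff P (q^(n-1))) h
        simp only [hP, Polynomial.finset_sum_coeff, Polynomial.coeff_X_pow,
          Polynomial.coeff_zero] at h2
        rw [Finset.sum_eq_single (n-1)] at h2
        · rw [if_pos rfl] at h2; exact one_ne_zero h2
        · intro i hi hne
          exact if_neg (fun hcon => hne (hinj (n-1) i hcon).symm)
        · intro hmem
          exact absurd (Finset.mem_range.mpr (by omega)) hmem
      have hdeg : P.natDegree ≤ q^(n-1) := by
        rw [hP]
        refine Polynomial.natDegree_sum_le_of_forall_le _ _ fun i hi => ?_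
        rw [Polynomial.natDegree_X_pow]
        exact Nat.pow_le_pow_right (by omega) (by
          have := Finset.mem_range.mp hi; omega)
      rw [h1]
      exact le_trans (aux_card_roots P hPne) hdeg
    -- ker of θ
    have hkerθ : Nat.card θ.ker ≤ q := by
      have h1 : (θ.ker : Set F) ⊆ {x : F | ((X:F[X])^q - X).eval x = 0} := by
        intro x hx
        simp only [SetLike.mem_coe, AddMonoidHom.mem_ker] at hx
        have hx' : φ x - x = 0 := hx
        simp only [Set.mem_setOf_eq, Polynomial.eval_sub, Polynomial.eval_pow,
          Polynomial.eval_X]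
        rw [← hφ]
        exact hx'
      have h2 : ((X:F[X])^q - X) ≠ 0 := by
        intro h
        have h3 := congrArg (fun P : F[X] => Polynomial.coeff P q) h
        simp only [Polynomial.coeff_sub, Polynomial.coeff_X_pow, if_pos rfl,
          Polynomial.coeff_X, Polynomial.coeff_zero] at h3
        rw [if_neg (by omega : ¬ (1 = q))] at h3
        simp at h3
      have c1 : Nat.card θ.ker = (θ.ker : Set F).ncard := Nat.card_coe_set_eq _
      have c2 := Set.ncard_le_ncard h1 (Set.toFinite _)
      have c3 := aux_card_roots _ h2
      have c4 : ((X:F[X])^q - X).natDegree ≤ q := by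
        refine le_trans (Polynomial.natDegree_sub_le _ _) ?_
        simp only [Polynomial.natDegree_X_pow, Polynomial.natDegree_X]
        omega
      omega
    -- ker of ψ
    have hkerψ : Nat.card ψ.ker ≤ q^(n-1) := by
      set P : F[X] := ∑ i ∈ range (2*k), ((X:F[X])^(q^(2*i+1)) - (X:F[X])^(q^(2*i))) with hP
      have heval : ∀ x : F, P.eval x = φ (S x) - S x := by
        intro x
        rw [hP, Polynomial.eval_finset_sum, hSdef]
        simp only
        rw [map_sum, ← Finset.sum_sub_distrib]
        refine Finset.sum_congr rfl fun i _ => ?_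
        rw [Polynomial.eval_sub, Polynomial.eval_pow, Polynomial.eval_pow, Polynomial.eval_X,
          hφpow]
      have hPne : P ≠ 0 := by
        intro h
        have h2 := congrArg (fun P : F[X] => Polynomial.coeff P (q^(n-1))) h
        simp only [hP, Polynomial.finset_sum_coeff, Polynomial.coeff_sub,
          Polynomial.coeff_X_pow, Polynomial.coeff_zero] at h2
        rw [Finset.sum_eq_single (2*k-1)] at h2
        · rw [if_pos (by congr 1; omega), if_neg (fun hcon => by
            have := hinj _ _ hcon; omega)] at h2
          simp at h2
        · intro i hi hne
          have hi' := Finset.mem_range.mp hi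
          rw [if_neg (fun hcon => by have := hinj _ _ hcon; omega),
            if_neg (fun hcon => by have := hinj _ _ hcon; omega)]
          ring
        · intro hmem
          exact absurd (Finset.mem_range.mpr (by omega)) hmem
      have hdeg : P.natDegree ≤ q^(n-1) := by
        rw [hP]
        refine Polynomial.natDegree_sum_le_of_forall_le _ _ fun i hi => ?_
        refine le_trans (Polynomial.natDegree_sub_le _ _) ?_
        have hi' := Finset.mem_range.mp hi
        simp only [Polynomial.natDegree_X_pow]
        have e1 : q^(2*i+1) ≤ q^(n-1) := Nat.pow_le_pow_right (by omega) (by omega)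
        have e2 : q^(2*i) ≤ q^(n-1) := Nat.pow_le_pow_right (by omega) (by omega)
        omega
      have h1 : (ψ.ker : Set F) ⊆ {x : F | P.eval x = 0} := by
        intro x hx
        simp only [SetLike.mem_coe, AddMonoidHom.mem_ker] at hx
        have hx' : φ (S x) - S x = 0 := hx
        simp only [Set.mem_setOf_eq, heval]
        exact hx'
      calc Nat.card ψ.ker = (ψ.ker : Set F).ncard := Nat.card_coe_set_eq _
        _ ≤ ({x : F | P.eval x = 0}).ncard := Set.ncard_le_ncard h1 (Set.toFinite _)
        _ ≤ P.natDegree := aux_card_roots _ hPne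
        _ ≤ q^(n-1) := hdeg
    -- range θ = Z
    have hsubθ : (θ.range : Set F) ⊆ Z := by
      rintro x ⟨c, rfl⟩
      have h1 : θ c = φ c - c := rfl
      rw [hZdef]
      show Tr (θ c) = 0
      rw [h1, hTrsub, hTrφ]
      ring
    have hθrange : (θ.range : Set F) = Z := by
      refine aux_range_eq θ Z hsubθ (q^(n-1)) q hZcard hkerθ ?_
      rw [Nat.card_eq_fintype_card, hF, ← pow_succ]
      congr 1
      omega
    -- range ψ = W
    have hsubψ : (ψ.range : Set F) ⊆ W := by
      rintro x ⟨y, rfl⟩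
      have h1 : ψ y = φ (S y) - S y := rfl
      rw [hWdef]
      show φ (ψ y) = -(ψ y)
      rw [h1, map_sub, hSfix]
      ring
    have hψrange : (ψ.range : Set F) = W := by
      refine aux_range_eq ψ W hsubψ q (q^(n-1)) hWcard hkerψ ?_
      rw [Nat.card_eq_fintype_card, hF, ← pow_succ']
      congr 1
      omega
    -- find d ≠ 0 in W
    have hWbig : 2 ≤ W.ncard := by
      have hWn : W.ncard = Nat.card ψ.range := by
        rw [← hψrange, ← Nat.card_coe_set_eq]
        rfl
      have h := aux_card_mul ψ
      rw [Nat.card_eq_fintype_card, hF] at h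
      have hr : q ≤ Nat.card ψ.range := by
        have h1 : q * q^(n-1) ≤ Nat.card ψ.range * q^(n-1) := by
          calc q * q^(n-1) = q^n := by rw [← pow_succ']; congr 1; omega
            _ = Nat.card ψ.range * Nat.card ψ.ker := h
            _ ≤ Nat.card ψ.range * q^(n-1) := Nat.mul_le_mul_left _ hkerψ
        exact Nat.le_of_mul_le_mul_right h1 (pow_pos (by omega) _)
      omega
    obtain ⟨w1, hw1, w2, hw2, hww⟩ := (Set.one_lt_ncard (Set.toFinite W)).mp (by omega)
    have hdex : ∃ d ∈ W, d ≠ 0 := by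
      by_cases h : w1 = 0
      · exact ⟨w2, hw2, fun hcon => hww (by rw [h, hcon])⟩
      · exact ⟨w1, hw1, h⟩
    obtain ⟨d, hdW, hd0⟩ := hdex
    have hφd : φ d = -d := hdW
    have hd2 : φ (φ d) = d := by rw [hφd, map_neg, hφd]; ring
    -- Tr d = 0, get c with φ c - c = d
    have hTrd : Tr d = 0 := by
      rw [hTrS]
      have hSd : S d = ((2*k : ℕ) : F) * d := by
        rw [hSdef]
        simp only
        rw [Finset.sum_congr rfl (fun i _ => hfix2pow d hd2 i), Finset.sum_const,
          card_range, nsmul_eq_mul]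
      rw [hSd, map_mul, hφnat, hφd]
      ring
    have hdZ : d ∈ (θ.range : Set F) := by rw [hθrange]; exact hTrd
    obtain ⟨c, hc⟩ := hdZ
    have hφc : φ c - c = d := hc
    have hc0 : c ≠ 0 := by
      intro h
      rw [h] at hφc
      simp at hφc
      exact hd0 hφc.symm
    have hφc' : φ c = c + d := by linear_combination hφc
    -- the element m
    set s : F := S δ with hsdef
    have hsa : s + φ s = a := (hTrS δ).symm.trans hTa
    set m : F := s + (k:F)*d + a*c/d with hmdef
    have hφm : φ m = -m := by
      rw [hmdef, map_add, map_add, map_mul, map_div₀, map_mul, hφnat, hφa, hφd, hφc']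
      field_simp [hd0]
      linear_combination d * hsa
    have hmW : -m ∈ W := by
      rw [hWdef]
      show φ (-m) = -(-m)
      rw [map_neg, hφm, neg_neg]
    rw [← hψrange] at hmW
    obtain ⟨y, hy⟩ := hmW
    have hψy : φ (S y) - S y = -m := hy
    -- collision
    have hcol : g (φ (y+c) - (y+c) + δ) + a*(y+c) = g (φ y - y + δ) + a*y := by
      have hu : φ (y+c) - (y+c) + δ = (φ y - y + δ) + d := by
        rw [map_add]
        linear_combination hφc
      rw [hu, hgexp (φ y - y + δ) d hd2]
      have hSV : S (φ y - y + δ) = (φ (S y) - S y) + s := by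
        rw [hSadd, hSsub, hSφ]
      rw [hSV, hψy, hmdef]
      field_simp
      ring
    have heq : (fun x : F => g (x ^ q - x + δ) + a * x) (y+c)
        = (fun x : F => g (x ^ q - x + δ) + a * x) y := by
      dsimp only
      rw [← hφ (y+c), ← hφ y]
      exact hcol
    have hyc := hbij.injective heq
    exact hc0 (by linear_combination hyc)
  · intro hTa
    rw [← Finite.injective_iff_bijective]
    intro x y hxy
    dsimp only at hxy
    rw [← hφ x, ← hφ y] at hxy
    by_contra hne
    have hc0 : x - y ≠ 0 := sub_ne_zero.mpr hne
    set c : F := x - y with hcdef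
    set d : F := φ c - c with hddef
    have hu : φ x - x + δ = (φ y - y + δ) + d := by
      rw [hddef, hcdef, map_sub]
      ring
    rw [hu] at hxy
    have hac : a * c = g (φ y - y + δ) - g ((φ y - y + δ) + d) := by
      rw [hcdef]
      linear_combination hxy
    have hc2 : φ (φ c) = c := by
      have h3 : φ (φ (a * c)) = a * c := by
        rw [hac, map_sub, map_sub, hgfix, hgfix]
      rw [map_mul, map_mul, hφa, hφa] at h3
      exact mul_left_cancel₀ ha h3
    have hd2 : φ (φ d) = d := by
      have h4 := congrArg φ hc2
      rw [hddef, map_sub, map_sub, h4, hc2]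
    have hstar : d * S (φ y - y + δ) + (k:F) * d^2 + a * c = 0 := by
      have hge := hgexp (φ y - y + δ) d hd2
      linear_combination hxy - hge + a * hcdef
    by_cases hd0 : d = 0
    · rw [hd0] at hstar
      simp only [zero_mul, zero_add, mul_zero, zero_pow, ne_eq, OfNat.ofNat_ne_zero,
        not_false_eq_true, add_zero] at hstar
      rcases mul_eq_zero.mp hstar with h | h
      · exact ha h
      · exact hc0 h
    · have hSV : S (φ y - y + δ) = (φ (S y) - S y) + S δ := by
        rw [hSadd, hSsub, hSφ]
      rw [hSV] at hstar
      set t : F := S y with htdef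
      set s : F := S δ with hsdef
      have hfixt : φ (φ t) = t := hSfix y
      have h5 := congrArg φ hstar
      simp only [map_add, map_mul, map_sub, map_pow, map_zero, map_natCast] at h5
      rw [hφa, hfixt] at h5
      have hφd : φ d = -d := by
        rw [hddef, map_sub, hc2]
        ring
      have hφc : φ c = c + d := by linear_combination -hddef
      rw [hφd, hφc] at h5
      have h6 : d * (a - s - φ s) = 0 := by linear_combination h5 - hstar
      have h7 : a = s + φ s := by
        rcases mul_eq_zero.mp h6 with h | h
        · exact absurd h hd0
        · linear_combination h
      apply hTa
      rw [hTrS δ]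
      exact h7.symm
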